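/- Let h := δ/(1 + e^ε) and let τ := q_h be the absolute value of the h-quantile of Lap(Δ/ε). Then the PositiveLaplaceMechanism with parameters ε, τ and sensitivity Δ is (ε, δ)-differentially private with respect to the neighboring relation |v − v'| ≤ Δ on real inputs. -/

import Mathlib

open MeasureTheory Real

/-- The Laplace distribution on ℝ with location 0 and scale `b`. -/
noncomputable def laplace (b : ℝ) : Measure ℝ :=
  volume.withDensity fun x => ENNReal.ofReal ((2 * b)⁻¹ * Real.exp (-|x| / b))

/-- On input `v`, the PositiveLaplaceMechanism samples `η ~ Lap(Δ/ε)` and outputs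
`max v (v + τ + η)`; so `P(M(v) ∈ S)` is the Laplace measure of the preimage. -/
noncomputable def posLapProb (ε τ Δ : ℝ) (v : ℝ) (S : Set ℝ) : ENNReal :=
  laplace (Δ / ε) {η : ℝ | max v (v + τ + η) ∈ S}

lemma lapAux_integrableOn (b a : ℝ) (hb : 0 < b) :
    IntegrableOn (fun x => Real.exp (x / b)) (Set.Iic a) := by
  refine integrableOn_Iic_of_intervalIntegral_norm_bounded (b * Real.exp (a / b)) a
    (fun y => ((Real.continuous_exp.comp (continuous_id.div_const b)).integrableOn_Ioc))
    Filter.tendsto_id (Filter.Eventually.of_forall fun y => ?_)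
  simp_rw [Real.norm_eq_abs, abs_of_pos (Real.exp_pos _)]
  open intervalIntegral in
  rw [integral_comp_div (f := Real.exp) hb.ne', integral_exp]
  rw [smul_eq_mul]
  simp only [id]
  nlinarith [Real.exp_pos (y / b), Real.exp_pos (a / b)]

lemma lapAux_integral (b a : ℝ) (hb : 0 < b) :
    ∫ x in Set.Iic a, Real.exp (x / b) = b * Real.exp (a / b) := by
  have hderiv : ∀ x ∈ Set.Iic a, HasDerivAt (fun x => b * Real.exp (x / b)) (Real.exp (x / b)) x := by
    intro x _
    have h1 : HasDerivAt (fun x : ℝ => x / b) (1 / b) x := (hasDerivAt_id x).div_const b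
    have h2 := (h1.exp).const_mul b
    have h3 : b * (Real.exp (x / b) * (1 / b)) = Real.exp (x / b) := by field_simp
    rw [h3] at h2
    exact h2
  have htend : Filter.Tendsto (fun x => b * Real.exp (x / b)) Filter.atBot (nhds 0) := by
    have : Filter.Tendsto (fun x : ℝ => x / b) Filter.atBot Filter.atBot :=
      Filter.tendsto_id.atBot_div_const hb
    simpa using (Real.tendsto_exp_atBot.comp this).const_mul b
  have := MeasureTheory.integral_Iic_of_hasDerivAt_of_tendsto' hderiv
    (lapAux_integrableOn b a hb) htend
  simpa using this

lemma laplace_Iic (b t : ℝ) (hb : 0 < b) (ht : 0 ≤ t) :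
    laplace b (Set.Iic (-t)) = ENNReal.ofReal (2⁻¹ * Real.exp (-t / b)) := by
  rw [laplace, withDensity_apply _ measurableSet_Iic]
  have hcong : ∀ x ∈ Set.Iic (-t),
      ENNReal.ofReal ((2 * b)⁻¹ * Real.exp (-|x| / b)) =
      ENNReal.ofReal ((2 * b)⁻¹ * Real.exp (x / b)) := by
    intro x hx
    have hx0 : x ≤ 0 := le_trans hx (by linarith)
    rw [abs_of_nonpos hx0, neg_neg]
  rw [setLIntegral_congr_fun measurableSet_Iic hcong]
  rw [← MeasureTheory.ofReal_integral_eq_lintegral_ofReal]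
  · rw [MeasureTheory.integral_const_mul, lapAux_integral b (-t) hb]
    congr 1
    field_simp
  · exact (lapAux_integrableOn b (-t) hb).const_mul _
  · exact Filter.Eventually.of_forall fun x => by positivity

lemma laplace_shift_le (b c : ℝ) (hb : 0 < b) (A : Set ℝ) (hA : MeasurableSet A) :
    laplace b A ≤ ENNReal.ofReal (Real.exp (|c| / b)) * laplace b ((fun x => x + c) ⁻¹' A) := by
  have hA' : MeasurableSet ((fun x => x + c) ⁻¹' A) := hA.preimage (measurable_add_const c)
  set g : ℝ → ENNReal := fun x => ENNReal.ofReal ((2 * b)⁻¹ * Real.exp (-|x| / b)) with hg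
  have hgm : Measurable g :=
    ENNReal.measurable_ofReal.comp
      (measurable_const.mul ((continuous_abs.neg.div_const b).rexp.measurable))
  rw [laplace, withDensity_apply _ hA, withDensity_apply _ hA']
  calc ∫⁻ x in A, g x
      ≤ ∫⁻ x in A, ENNReal.ofReal (Real.exp (|c| / b)) * g (x + -c) := by
        refine setLIntegral_mono' hA fun x _ => ?_
        rw [hg]
        simp only
        rw [← ENNReal.ofReal_mul (Real.exp_pos _).le]
        refine ENNReal.ofReal_le_ofReal ?_
        rw [show Real.exp (|c| / b) * ((2 * b)⁻¹ * Real.exp (-|x + -c| / b))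
            = (2 * b)⁻¹ * (Real.exp (|c| / b) * Real.exp (-|x + -c| / b)) by ring,
          ← Real.exp_add, show |c| / b + -|x + -c| / b = (|c| - |x + -c|) / b by ring]
        have h1 : -|x| ≤ |c| - |x + -c| := by
          have h := abs_add_le x (-c)
          rw [abs_neg] at h
          linarith
        have h2 : -|x| / b ≤ (|c| - |x + -c|) / b := by gcongr
        have hpos : (0:ℝ) ≤ (2 * b)⁻¹ := by positivity
        exact mul_le_mul_of_nonneg_left (Real.exp_le_exp.2 h2) hpos
    _ = ENNReal.ofReal (Real.exp (|c| / b)) * ∫⁻ x in A, g (x + -c) := by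
        rw [lintegral_const_mul' _ _ ENNReal.ofReal_ne_top]
    _ = ENNReal.ofReal (Real.exp (|c| / b)) * ∫⁻ x in (fun x => x + c) ⁻¹' A, g x := by
        congr 1
        have hmp : MeasurePreserving (fun x : ℝ => x + -c) volume volume :=
          measurePreserving_add_right volume (-c)
        have hpre : (fun x : ℝ => x + -c) ⁻¹' ((fun x => x + c) ⁻¹' A) = A := by
          ext x; simp
        calc ∫⁻ x in A, g (x + -c)
            = ∫⁻ x in (fun x : ℝ => x + -c) ⁻¹' ((fun x => x + c) ⁻¹' A), g (x + -c) := by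
              rw [hpre]
          _ = ∫⁻ x in (fun x => x + c) ⁻¹' A, g x :=
              hmp.setLIntegral_comp_preimage hA' hgm

lemma posLap_one_side (ε δ Δ : ℝ) (hε : 0 < ε) (hδ : δ ∈ Set.Ioo (0 : ℝ) 1) (hΔ : 0 < Δ)
    (h τ : ℝ) (hh : h = δ / (1 + Real.exp ε))
    (hτ : τ = (Δ / ε) * Real.log (1 / (2 * h)))
    (v v' : ℝ) (hvv : |v - v'| ≤ Δ) (S : Set ℝ) (hS : MeasurableSet S) :
    posLapProb ε τ Δ v S ≤
      ENNReal.ofReal (Real.exp ε) * posLapProb ε τ Δ v' S + ENNReal.ofReal δ := by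
  set b : ℝ := Δ / ε with hbdef
  have hb : 0 < b := div_pos hΔ hε
  have hexp1 : 1 < Real.exp ε := by
    have := Real.exp_lt_exp.2 hε
    rwa [Real.exp_zero] at this
  have hh0 : 0 < h := by
    rw [hh]; exact div_pos hδ.1 (by positivity)
  have h2h : 2 * h < 1 := by
    rw [hh, show 2 * (δ / (1 + Real.exp ε)) = 2 * δ / (1 + Real.exp ε) by ring]
    rw [div_lt_one (by positivity)]
    nlinarith [hδ.2]
  have hτ0 : 0 ≤ τ := by
    rw [hτ]
    exact mul_nonneg hb.le (Real.log_nonneg (one_le_one_div (by positivity) h2h.le))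
  have hexp_tau : Real.exp (-τ / b) = 2 * h := by
    rw [hτ]
    have heq : -(b * Real.log (1 / (2 * h))) / b = Real.log (2 * h) := by
      rw [one_div, Real.log_inv]
      field_simp
    rw [heq, Real.exp_log (by positivity)]
  have tail : laplace b (Set.Iic (-τ)) = ENNReal.ofReal h := by
    rw [laplace_Iic b τ hb hτ0, hexp_tau]
    congr 1; ring
  set c : ℝ := v' - v with hcdef
  have hc : |c| ≤ Δ := by rw [hcdef, abs_sub_comm]; exact hvv
  set A : ℝ → Set ℝ := fun w => {η : ℝ | max w (w + τ + η) ∈ S} with hA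
  set B : ℝ → Set ℝ := fun w => {η : ℝ | -τ ≤ η ∧ w + τ + η ∈ S} with hB
  have hBmeas : ∀ w, MeasurableSet (B w) := by
    intro w
    have : B w = Set.Ici (-τ) ∩ (fun η => w + τ + η) ⁻¹' S := by
      ext η
      simp only [hB, Set.mem_setOf_eq, Set.mem_inter_iff, Set.mem_Ici, Set.mem_preimage]
    rw [this]
    exact measurableSet_Ici.inter (hS.preimage (measurable_const.add measurable_id))
  have sub1 : A v ⊆ Set.Iic (-τ) ∪ B v := by
    intro η hη
    rcases le_total η (-τ) with hle | hge
    · exact Or.inl hle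
    · refine Or.inr ⟨hge, ?_⟩
      have hmax : max v (v + τ + η) = v + τ + η := max_eq_right (by linarith)
      simpa [hA, hmax] using hη
  have sub2 : B v' ⊆ A v' := by
    rintro η ⟨h1, h2⟩
    have hmax : max v' (v' + τ + η) = v' + τ + η := max_eq_right (by linarith)
    simp [hA, hmax]
    exact h2
  have sub3 : (fun x => x + c) ⁻¹' (B v) ⊆ Set.Iic (-τ) ∪ B v' := by
    intro x hx
    obtain ⟨h1, h2⟩ := hx
    rcases le_total x (-τ) with hle | hge
    · exact Or.inl hle
    · refine Or.inr ⟨hge, ?_⟩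
      have : v + τ + (x + c) = v' + τ + x := by rw [hcdef]; ring
      rwa [this] at h2
  have hexpc : Real.exp (|c| / b) ≤ Real.exp ε := by
    apply Real.exp_le_exp.2
    have hΔb : Δ / b = ε := by
      rw [hbdef]; field_simp
    calc |c| / b ≤ Δ / b := by gcongr
      _ = ε := hΔb
  have hδeq : h + Real.exp ε * h = δ := by
    rw [hh]
    field_simp
  show laplace b (A v) ≤ ENNReal.ofReal (Real.exp ε) * laplace b (A v') + ENNReal.ofReal δ
  calc laplace b (A v)
      ≤ laplace b (Set.Iic (-τ) ∪ B v) := measure_mono sub1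
    _ ≤ laplace b (Set.Iic (-τ)) + laplace b (B v) := measure_union_le _ _
    _ ≤ ENNReal.ofReal h +
        ENNReal.ofReal (Real.exp ε) * laplace b ((fun x => x + c) ⁻¹' (B v)) := by
        rw [tail]
        gcongr
        exact (laplace_shift_le b c hb (B v) (hBmeas v)).trans
          (by gcongr)
    _ ≤ ENNReal.ofReal h +
        ENNReal.ofReal (Real.exp ε) * (laplace b (Set.Iic (-τ)) + laplace b (B v')) := by
        gcongr
        exact (measure_mono sub3).trans (measure_union_le _ _)
    _ ≤ ENNReal.ofReal h +
        ENNReal.ofReal (Real.exp ε) * (ENNReal.ofReal h + laplace b (A v')) := by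
        rw [tail]
        gcongr
    _ = ENNReal.ofReal (Real.exp ε) * laplace b (A v') +
        (ENNReal.ofReal h + ENNReal.ofReal (Real.exp ε) * ENNReal.ofReal h) := by ring
    _ = ENNReal.ofReal (Real.exp ε) * laplace b (A v') + ENNReal.ofReal δ := by
        congr 1
        rw [← ENNReal.ofReal_mul (Real.exp_pos _).le,
          ← ENNReal.ofReal_add hh0.le (by positivity), hδeq]

/-- With `h := δ/(1+e^ε)` and `τ := q_h = (Δ/ε)·ln(1/(2h))` (the absolute value of the
`h`-quantile of `Lap(Δ/ε)`), the PositiveLaplaceMechanism is `(ε, δ)`-DP with respect to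
the neighboring relation `|v − v'| ≤ Δ`. -/
theorem stmt_1 (ε δ Δ : ℝ) (hε : 0 < ε) (hδ : δ ∈ Set.Ioo (0 : ℝ) 1) (hΔ : 0 < Δ)
    (h τ : ℝ) (hh : h = δ / (1 + Real.exp ε))
    (hτ : τ = (Δ / ε) * Real.log (1 / (2 * h))) :
    ∀ v v' : ℝ, |v - v'| ≤ Δ → ∀ S : Set ℝ, MeasurableSet S →
      posLapProb ε τ Δ v S ≤
        ENNReal.ofReal (Real.exp ε) * posLapProb ε τ Δ v' S + ENNReal.ofReal δ ∧
      posLapProb ε τ Δ v' S ≤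
        ENNReal.ofReal (Real.exp ε) * posLapProb ε τ Δ v S + ENNReal.ofReal δ := by
  intro v v' hvv S hS
  refine ⟨posLap_one_side ε δ Δ hε hδ hΔ h τ hh hτ v v' hvv S hS,
    posLap_one_side ε δ Δ hε hδ hΔ h τ hh hτ v' v (by rwa [abs_sub_comm]) S hS⟩
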